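/- Let p be a prime of the form p = d_1 ⋯ d_n + 1 with n odd and each d_i ≥ 2, with the weighted diagonal ℤ/p-action on ℂ^n with weights w_1 = 1, w_{i+1} = (−1)^i d_1⋯d_i. Then no nonzero τ-invariant quadratic form exists, i.e., rk(τ) = 0; equivalently, for all i, j ∈ {1,…,n}, w_i + w_j ≢ 0 (mod p). -/
import Mathlib


open Finset

/-- For a prime `p = d₀⋯dₙ + 1` with an odd number of factors `dᵢ ≥ 2` and the
loop weights `w₀ = 1`, `w_{k+1} = (-1)^{k+1} d₀⋯d_k`, no sum `wᵢ + wⱼ` is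
divisible by `p`; hence there is no nonzero invariant quadratic form. -/
theorem stmt17 (n : ℕ) (hn : Odd (n + 1)) (d : Fin (n + 1) → ℕ) (hd : ∀ i, 2 ≤ d i)
    (hp : Nat.Prime ((∏ i, d i) + 1))
    (w : Fin (n + 1) → ℤ) (hw0 : w 0 = 1)
    (hw : ∀ k : Fin (n + 1), ∀ h : k.val + 1 < n + 1,
      w ⟨k.val + 1, h⟩ = (-1 : ℤ) ^ (k.val + 1) * ∏ j ∈ Finset.Iic k, (d j : ℤ)) :
    ∀ i j : Fin (n + 1), ¬ (((∏ i, d i : ℕ) + 1 : ℤ) ∣ w i + w j) := by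
  -- abbreviation for partial products
  set Q : Fin (n + 1) → ℕ := fun k => ∏ m ∈ Finset.Iio k, d m with hQ
  have hQpos : ∀ k, 0 < Q k := fun k =>
    Finset.prod_pos fun m _ => lt_of_lt_of_le two_pos (hd m)
  -- closed formula for the weights
  have hwval : ∀ k : Fin (n + 1), w k = (-1 : ℤ) ^ k.val * (Q k : ℤ) := by
    rintro ⟨kv, hk⟩
    match kv, hk with
    | 0, hk =>
      have : (⟨0, hk⟩ : Fin (n + 1)) = 0 := rfl
      rw [this, hw0]
      have he : Finset.Iio (0 : Fin (n + 1)) = ∅ := by ext a; simp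
      simp [hQ, he]
    | m + 1, hk =>
      have hm : m < n + 1 := Nat.lt_of_succ_lt hk
      have := hw ⟨m, hm⟩ hk
      rw [this]
      have hset : Finset.Iic (⟨m, hm⟩ : Fin (n + 1)) = Finset.Iio (⟨m + 1, hk⟩ : Fin (n + 1)) := by
        ext a
        simp [Fin.lt_def, Fin.le_def, Nat.lt_succ_iff]
      rw [hset]
      simp [hQ, Nat.cast_prod]
  -- 2 * Q k ≤ total product
  have hQle : ∀ k, 2 * Q k ≤ ∏ m, d m := by
    intro k
    rw [← Finset.prod_sdiff (Finset.subset_univ (Finset.Iio k))]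
    have hk : k ∈ Finset.univ \ Finset.Iio k := by simp
    have h2 : 2 ≤ ∏ m ∈ Finset.univ \ Finset.Iio k, d m :=
      le_trans (hd k)
        (Finset.single_le_prod' (fun m _ => le_trans one_le_two (hd m)) hk)
    exact Nat.mul_le_mul_right _ h2
  -- strict monotonicity of Q
  have hmono : ∀ a b : Fin (n + 1), a < b → Q a < Q b := by
    intro a b hab
    have hsub : Finset.Iio a ⊆ Finset.Iio b := Finset.Iio_subset_Iio (le_of_lt hab)
    have := Finset.prod_sdiff (f := d) hsub
    have ha : a ∈ Finset.Iio b \ Finset.Iio a := by simp [hab]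
    have h2 : 2 ≤ ∏ m ∈ Finset.Iio b \ Finset.Iio a, d m :=
      le_trans (hd a)
        (Finset.single_le_prod' (fun m _ => le_trans one_le_two (hd m)) ha)
    have : Q b = (∏ m ∈ Finset.Iio b \ Finset.Iio a, d m) * Q a := this.symm
    rw [this]
    have := hQpos a
    calc Q a < 2 * Q a := by omega
    _ ≤ _ := Nat.mul_le_mul_right _ h2
  intro i j hdvd
  -- bound on |w i + w j|
  have habs : ∀ k, |w k| = (Q k : ℤ) := by
    intro k
    rw [hwval k, abs_mul, abs_pow, abs_neg, abs_one, one_pow, one_mul,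
      Int.abs_natCast]
  have h1 : |w i + w j| ≤ ((∏ m, d m : ℕ) : ℤ) := by
    calc |w i + w j| ≤ |w i| + |w j| := abs_add_le _ _
    _ = ((Q i : ℤ) + (Q j : ℤ)) := by rw [habs, habs]
    _ ≤ ((∏ m, d m : ℕ) : ℤ) := by
        have h1 := hQle i
        have h2 := hQle j
        have : Q i + Q j ≤ ∏ m, d m := by omega
        exact_mod_cast this
  -- nonvanishing
  have h2 : w i + w j ≠ 0 := by
    rw [hwval i, hwval j]
    have hQi := hQpos i
    have hQj := hQpos j
    rcases Nat.even_or_odd i.val with hi | hi <;>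
      rcases Nat.even_or_odd j.val with hj | hj
    · rw [hi.neg_one_pow, hj.neg_one_pow]
      have : (0:ℤ) < (Q i : ℤ) + (Q j : ℤ) := by positivity
      simp only [one_mul]
      omega
    · -- i even, j odd : Q i - Q j ≠ 0
      rw [hi.neg_one_pow, hj.neg_one_pow]
      have hne : i ≠ j := by
        intro h; rw [h] at hi; exact (Nat.not_odd_iff_even.mpr hi) hj
      have : Q i ≠ Q j := by
        rcases lt_or_gt_of_ne (Fin.val_ne_of_ne hne) with h | h
        · exact ne_of_lt (hmono i j (Fin.lt_def.mpr h))
        · exact ne_of_gt (hmono j i (Fin.lt_def.mpr h))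
      have : (Q i : ℤ) ≠ (Q j : ℤ) := by exact_mod_cast this
      simp only [one_mul, neg_one_mul]
      omega
    · rw [hi.neg_one_pow, hj.neg_one_pow]
      have hne : i ≠ j := by
        intro h; rw [h] at hi; exact (Nat.not_odd_iff_even.mpr hj) hi
      have : Q i ≠ Q j := by
        rcases lt_or_gt_of_ne (Fin.val_ne_of_ne hne) with h | h
        · exact ne_of_lt (hmono i j (Fin.lt_def.mpr h))
        · exact ne_of_gt (hmono j i (Fin.lt_def.mpr h))
      have : (Q i : ℤ) ≠ (Q j : ℤ) := by exact_mod_cast this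
      simp only [one_mul, neg_one_mul]
      omega
    · rw [hi.neg_one_pow, hj.neg_one_pow]
      have : (0:ℤ) < (Q i : ℤ) + (Q j : ℤ) := by positivity
      simp only [neg_one_mul]
      omega
  -- conclude
  have hpos : 0 < |w i + w j| := abs_pos.mpr h2
  have hdvd' : ((∏ i, d i : ℕ) + 1 : ℤ) ∣ |w i + w j| := (dvd_abs _ _).mpr hdvd
  have := Int.le_of_dvd hpos hdvd'
  omega
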